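/- Let Z ∈ ℝ[[u,v]] be of order at least 2, written Z = (1/2)(a₂₀u² + 2a₁₁uv + a₀₂v²) + Z̃ with Z̃ of order at least 3. Then for k + l = m ≥ 3, the normalized degree-m coefficient of (Z_u)² equals 2k a₂₀ Z(k,l) + 2l a₁₁ Z(k+1,l−1) plus a polynomial depending only on the coefficients Z(a,b) with a+b ≤ m−1. -/

import Mathlib

/-- The normalized (k,l)-coefficient of a formal power series `P ∈ ℝ[[u,v]]`:
`P(k,l) = k! l! ×` (coefficient of `u^k v^l`), where `u, v` are the variables `X 0, X 1`. -/
noncomputable def ncoeff (P : MvPowerSeries (Fin 2) ℝ) (k l : ℕ) : ℝ :=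
  (Nat.factorial k : ℝ) * (Nat.factorial l : ℝ) *
    MvPowerSeries.coeff (Finsupp.single 0 k + Finsupp.single 1 l) P

/-- `P` has order at least `m`: all normalized coefficients of total degree `< m` vanish. -/
def OrdGE (m : ℕ) (P : MvPowerSeries (Fin 2) ℝ) : Prop :=
  ∀ k l : ℕ, k + l < m → ncoeff P k l = 0

/-- The formal partial derivative with respect to the first variable `u`. -/
noncomputable def pderivU (P : MvPowerSeries (Fin 2) ℝ) : MvPowerSeries (Fin 2) ℝ :=
  fun d => ((d 0 : ℕ) + 1 : ℝ) * MvPowerSeries.coeff (d + Finsupp.single 0 1) P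

/-- The quadratic form `(1/2)(a₂₀u² + 2a₁₁uv + a₀₂v²)` as a power series. -/
noncomputable def quadPart (a20 a11 a02 : ℝ) : MvPowerSeries (Fin 2) ℝ :=
  (a20 / 2) • (MvPowerSeries.X 0 ^ 2) + a11 • (MvPowerSeries.X 0 * MvPowerSeries.X 1)
    + (a02 / 2) • (MvPowerSeries.X 1 ^ 2)

open MvPowerSeries Finsupp

lemma fin2_decomp (e : Fin 2 →₀ ℕ) :
    e = Finsupp.single 0 (e 0) + Finsupp.single 1 (e 1) := by
  ext i; fin_cases i <;> simp [Finsupp.single_apply]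

lemma ncoeff_eq (P : MvPowerSeries (Fin 2) ℝ) (e : Fin 2 →₀ ℕ) :
    MvPowerSeries.coeff e P =
      ncoeff P (e 0) (e 1) / ((Nat.factorial (e 0) : ℝ) * (Nat.factorial (e 1))) := by
  rw [ncoeff, ← fin2_decomp]
  field_simp

lemma coeff_zero_of_ordGE {m : ℕ} {P : MvPowerSeries (Fin 2) ℝ} (h : OrdGE m P)
    (e : Fin 2 →₀ ℕ) (he : e 0 + e 1 < m) : MvPowerSeries.coeff e P = 0 := by
  rw [ncoeff_eq, h _ _ he, zero_div]

lemma coeff_pderivU (P : MvPowerSeries (Fin 2) ℝ) (e : Fin 2 →₀ ℕ) :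
    MvPowerSeries.coeff e (pderivU P) =
      ((e 0 : ℕ) + 1 : ℝ) * MvPowerSeries.coeff (e + Finsupp.single 0 1) P := rfl

lemma pderivU_sub (P Q' : MvPowerSeries (Fin 2) ℝ) :
    pderivU (P - Q') = pderivU P - pderivU Q' := by
  ext e
  simp [coeff_pderivU, map_sub, mul_sub]


lemma quad_eq (a20 a11 a02 : ℝ) :
    quadPart a20 a11 a02 =
      monomial (single 0 2) (a20 / 2) + monomial (single 0 1 + single 1 1) a11
        + monomial (single 1 2) (a02 / 2) := by
  rw [quadPart, X_pow_eq, X_pow_eq, X_def, X_def, monomial_mul_monomial, one_mul]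
  rw [← map_smul, ← map_smul, ← map_smul]
  simp [smul_eq_mul]

lemma pderivU_quad (a20 a11 a02 : ℝ) :
    pderivU (quadPart a20 a11 a02) =
      monomial (single 0 1) a20 + monomial (single 1 1) a11 := by
  ext e
  rw [coeff_pderivU, quad_eq]
  have key1 : e + single 0 1 = single 0 2 ↔ e = single 0 1 := by
    constructor
    · intro h
      have : e + single 0 1 = single 0 1 + single 0 1 := by
        rw [h]; rw [← Finsupp.single_add]
      exact add_right_cancel this
    · rintro rfl; rw [← Finsupp.single_add]
  have key2 : e + single 0 1 = single 0 1 + single 1 1 ↔ e = single 1 1 := by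
    rw [add_comm (single 0 1) (single 1 1)]
    exact ⟨fun h => add_right_cancel h, fun h => by rw [h]⟩
  have key3 : e + single 0 1 ≠ single (1 : Fin 2) 2 := by
    intro h
    have := congrArg (fun f => f (0 : Fin 2)) h
    simp [Finsupp.single_apply] at this
  have hne : (single (0 : Fin 2) 1 : Fin 2 →₀ ℕ) ≠ single 1 1 := by
    intro h
    have := congrArg (fun f => f (0 : Fin 2)) h
    simp [Finsupp.single_apply] at this
  by_cases h1 : e = single 0 1
  · subst h1
    simp [coeff_monomial, key1, key2, key3, hne, Finsupp.single_apply]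
    ring
  · by_cases h2 : e = single 1 1
    · subst h2
      simp [coeff_monomial, key1, key2, key3, h1, hne, Ne.symm hne, Finsupp.single_apply]
    · simp [coeff_monomial, key1, key2, key3, h1, h2]

lemma d_apply0 (k l : ℕ) : ((single (0 : Fin 2) k + single 1 l : Fin 2 →₀ ℕ)) 0 = k := by
  simp [Finsupp.single_apply]

lemma d_apply1 (k l : ℕ) : ((single (0 : Fin 2) k + single 1 l : Fin 2 →₀ ℕ)) 1 = l := by
  simp [Finsupp.single_apply]

lemma sub1 (Y : MvPowerSeries (Fin 2) ℝ) (a20 : ℝ) (k l : ℕ) :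
    MvPowerSeries.coeff (single 0 k + single 1 l)
        (pderivU Y * monomial (single 0 1) a20) =
      (k : ℝ) * MvPowerSeries.coeff (single 0 k + single 1 l) Y * a20 := by
  rw [coeff_mul_monomial]
  rcases k with _ | k'
  · rw [if_neg]
    · simp
    · intro h
      have := Finsupp.single_le_iff.mp h
      rw [d_apply0] at this
      omega
  · rw [if_pos]
    · have hd : (single (0 : Fin 2) (k' + 1) + single 1 l) - single 0 1
          = single 0 k' + single 1 l := by
        have : (single (0 : Fin 2) (k' + 1) + single 1 l)
            = (single 0 k' + single 1 l) + single 0 1 := by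
          rw [add_right_comm, ← Finsupp.single_add]
        rw [this, add_tsub_cancel_right]
      rw [hd, coeff_pderivU, d_apply0]
      have : (single (0 : Fin 2) k' + single 1 l) + single 0 1
          = single 0 (k' + 1) + single 1 l := by
        rw [add_right_comm, ← Finsupp.single_add]
      rw [this]
      push_cast
      ring
    · exact Finsupp.single_le_iff.mpr (by rw [d_apply0]; omega)

lemma sub2 (Y : MvPowerSeries (Fin 2) ℝ) (a11 : ℝ) (k l' : ℕ) :
    MvPowerSeries.coeff (single 0 k + single 1 (l' + 1))
        (pderivU Y * monomial (single 1 1) a11) =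
      ((k : ℝ) + 1) * MvPowerSeries.coeff (single 0 (k + 1) + single 1 l') Y * a11 := by
  rw [coeff_mul_monomial, if_pos]
  · have hd : (single (0 : Fin 2) k + single 1 (l' + 1)) - single 1 1
        = single 0 k + single 1 l' := by
      have : (single (0 : Fin 2) k + single 1 (l' + 1))
          = (single 0 k + single 1 l') + single 1 1 := by
        rw [add_assoc, ← Finsupp.single_add]
      rw [this, add_tsub_cancel_right]
    rw [hd, coeff_pderivU, d_apply0]
    have : (single (0 : Fin 2) k + single 1 l') + single 0 1
        = single 0 (k + 1) + single 1 l' := by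
      rw [add_right_comm, ← Finsupp.single_add]
    rw [this]
  · exact Finsupp.single_le_iff.mpr (by rw [d_apply1]; omega)

lemma sub2' (Y : MvPowerSeries (Fin 2) ℝ) (a11 : ℝ) (k : ℕ) :
    MvPowerSeries.coeff (single 0 k + single 1 0)
        (pderivU Y * monomial (single 1 1) a11) = 0 := by
  rw [coeff_mul_monomial, if_neg]
  intro h
  have := Finsupp.single_le_iff.mp h
  rw [d_apply1] at this
  omega

lemma sub3 (a20 a11 : ℝ) (k l : ℕ) (h3 : 3 ≤ k + l) :
    MvPowerSeries.coeff (single (0 : Fin 2) k + single 1 l)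
        ((monomial (single (0 : Fin 2) 1) a20 + monomial (single (1 : Fin 2) 1) a11) ^ 2)
      = 0 := by
  have hd0 := d_apply0 k l
  have hd1 := d_apply1 k l
  rw [sq, add_mul, mul_add, mul_add, monomial_mul_monomial, monomial_mul_monomial,
    monomial_mul_monomial, monomial_mul_monomial]
  have ne1 : (single (0 : Fin 2) k + single 1 l : Fin 2 →₀ ℕ) ≠ single 0 1 + single 0 1 := by
    intro h
    have h0 := congrArg (fun f => f (0 : Fin 2)) h
    have h1 := congrArg (fun f => f (1 : Fin 2)) h
    simp [hd0, hd1, Finsupp.single_apply] at h0 h1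
    omega
  have ne2 : (single (0 : Fin 2) k + single 1 l : Fin 2 →₀ ℕ) ≠ single 0 1 + single 1 1 := by
    intro h
    have h0 := congrArg (fun f => f (0 : Fin 2)) h
    have h1 := congrArg (fun f => f (1 : Fin 2)) h
    simp [hd0, hd1, Finsupp.single_apply] at h0 h1
    omega
  have ne3 : (single (0 : Fin 2) k + single 1 l : Fin 2 →₀ ℕ) ≠ single 1 1 + single 0 1 := by
    rw [add_comm (single 1 1)]; exact ne2
  have ne4 : (single (0 : Fin 2) k + single 1 l : Fin 2 →₀ ℕ) ≠ single 1 1 + single 1 1 := by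
    intro h
    have h0 := congrArg (fun f => f (0 : Fin 2)) h
    have h1 := congrArg (fun f => f (1 : Fin 2)) h
    simp [hd0, hd1, Finsupp.single_apply] at h0 h1
    omega
  classical
  simp only [map_add, coeff_monomial]
  split_ifs <;>
    first
      | (exfalso; exact ne1 (by assumption))
      | (exfalso; exact ne2 (by assumption))
      | (exfalso; exact ne3 (by assumption))
      | (exfalso; exact ne4 (by assumption))
      | ring

lemma lead_val (a20 a11 : ℝ) (Y : MvPowerSeries (Fin 2) ℝ) (k l : ℕ) (h3 : 3 ≤ k + l) :
    ncoeff (2 * pderivU Y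
          * (monomial (single (0 : Fin 2) 1) a20 + monomial (single (1 : Fin 2) 1) a11)
        - (monomial (single (0 : Fin 2) 1) a20 + monomial (single (1 : Fin 2) 1) a11) ^ 2)
        k l
      = 2 * (k : ℝ) * a20 * ncoeff Y k l + 2 * (l : ℝ) * a11 * ncoeff Y (k + 1) (l - 1) := by
  have hexp : 2 * pderivU Y
          * (monomial (single (0 : Fin 2) 1) a20 + monomial (single (1 : Fin 2) 1) a11)
      = pderivU Y * monomial (single (0 : Fin 2) 1) a20
          + pderivU Y * monomial (single (1 : Fin 2) 1) a11
          + (pderivU Y * monomial (single (0 : Fin 2) 1) a20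
              + pderivU Y * monomial (single (1 : Fin 2) 1) a11) := by
    ring
  rw [ncoeff, map_sub, sub3 _ _ _ _ h3, sub_zero, hexp]
  simp only [map_add]
  rw [sub1]
  rcases l with _ | l'
  · rw [sub2', ncoeff, ncoeff]
    simp [Nat.factorial]
    ring
  · rw [sub2, ncoeff, ncoeff]
    have h1 : (single (0 : Fin 2) (k + 1) + single 1 l' : Fin 2 →₀ ℕ)
        = single 0 (k + 1) + single 1 ((l' + 1) - 1) := by norm_num
    rw [h1]
    push_cast [Nat.factorial_succ]
    ring

lemma sq_coeff_eq (W W' : MvPowerSeries (Fin 2) ℝ) (m : ℕ)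
    (hW : ∀ e : Fin 2 →₀ ℕ, e 0 + e 1 ≤ 1 → MvPowerSeries.coeff e W = 0)
    (hW' : ∀ e : Fin 2 →₀ ℕ, e 0 + e 1 ≤ 1 → MvPowerSeries.coeff e W' = 0)
    (hag : ∀ e : Fin 2 →₀ ℕ, e 0 + e 1 ≤ m - 2 →
      MvPowerSeries.coeff e W = MvPowerSeries.coeff e W')
    (d : Fin 2 →₀ ℕ) (hd : d 0 + d 1 = m) :
    MvPowerSeries.coeff d (W ^ 2) = MvPowerSeries.coeff d (W' ^ 2) := by
  classical
  rw [sq, sq, coeff_mul, coeff_mul]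
  apply Finset.sum_congr rfl
  intro p hp
  rw [Finset.HasAntidiagonal.mem_antidiagonal] at hp
  have h0 := congrArg (fun f => f (0 : Fin 2)) hp
  have h1 := congrArg (fun f => f (1 : Fin 2)) hp
  simp only [Finsupp.add_apply] at h0 h1
  by_cases hc1 : p.1 0 + p.1 1 ≤ 1
  · rw [hW _ hc1, hW' _ hc1, zero_mul, zero_mul]
  · by_cases hc2 : p.2 0 + p.2 1 ≤ 1
    · rw [hW _ hc2, hW' _ hc2, mul_zero, mul_zero]
    · rw [hag p.1 (by omega), hag p.2 (by omega)]


/-- Leading-term computation for `z_u²`: if `Z = (1/2)(a₂₀u² + 2a₁₁uv + a₀₂v²) + Z̃`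
with `Z̃ ∈ 𝒪₃` (so `Z ∈ 𝒪₂`), then for `k + l = m ≥ 3` the quantity
`(Z_u²)(k,l) − (2k a₂₀ Z(k,l) + 2l a₁₁ Z(k+1,l−1))` depends only on the coefficients
of `Z` of total degree at most `m − 1`: it is unchanged if `Z` is replaced by any
`Z' = (1/2)(a₂₀u² + 2a₁₁uv + a₀₂v²) + Z̃'`, `Z̃' ∈ 𝒪₃`, agreeing with `Z` in all
coefficients of degree `≤ m − 1`. -/
theorem zu_sq_leading_term (a20 a11 a02 : ℝ) (Z Z' : MvPowerSeries (Fin 2) ℝ)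
    (hZord : OrdGE 2 Z) (hZord' : OrdGE 2 Z')
    (hZ : OrdGE 3 (Z - quadPart a20 a11 a02)) (hZ' : OrdGE 3 (Z' - quadPart a20 a11 a02))
    (m : ℕ) (hm : 3 ≤ m)
    (hagree : ∀ a b : ℕ, a + b ≤ m - 1 → ncoeff Z a b = ncoeff Z' a b) :
    ∀ k l : ℕ, k + l = m →
      ncoeff (pderivU Z ^ 2) k l
          - (2 * (k : ℝ) * a20 * ncoeff Z k l + 2 * (l : ℝ) * a11 * ncoeff Z (k + 1) (l - 1)) =
        ncoeff (pderivU Z' ^ 2) k l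
          - (2 * (k : ℝ) * a20 * ncoeff Z' k l
              + 2 * (l : ℝ) * a11 * ncoeff Z' (k + 1) (l - 1)) := by
  intro k l hkl
  have h3 : 3 ≤ k + l := hkl ▸ hm
  set Q : MvPowerSeries (Fin 2) ℝ := quadPart a20 a11 a02 with hQdef
  set Qu : MvPowerSeries (Fin 2) ℝ :=
    monomial (single (0 : Fin 2) 1) a20 + monomial (single (1 : Fin 2) 1) a11 with hQu
  have hdec : ∀ Y : MvPowerSeries (Fin 2) ℝ,
      pderivU Y ^ 2 = pderivU (Y - Q) ^ 2 + (2 * pderivU Y * Qu - Qu ^ 2) := by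
    intro Y
    rw [pderivU_sub, hQdef, pderivU_quad, ← hQu]
    ring
  have hnadd : ∀ A B : MvPowerSeries (Fin 2) ℝ,
      ncoeff (A + B) k l = ncoeff A k l + ncoeff B k l := by
    intro A B
    rw [ncoeff, ncoeff, ncoeff, map_add]
    ring
  have eZ := hdec Z
  have eZ' := hdec Z'
  have cagree : ∀ e : Fin 2 →₀ ℕ, e 0 + e 1 ≤ m - 1 →
      MvPowerSeries.coeff e Z = MvPowerSeries.coeff e Z' := by
    intro e he
    rw [ncoeff_eq, ncoeff_eq Z', hagree _ _ he]
  have hord : ∀ Y : MvPowerSeries (Fin 2) ℝ, OrdGE 3 (Y - Q) →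
      ∀ e : Fin 2 →₀ ℕ, e 0 + e 1 ≤ 1 → MvPowerSeries.coeff e (pderivU (Y - Q)) = 0 := by
    intro Y hY e he
    rw [coeff_pderivU, coeff_zero_of_ordGE hY, mul_zero]
    simp only [Finsupp.add_apply, Finsupp.single_apply]
    simp
    omega
  have hsq : ncoeff (pderivU (Z - Q) ^ 2) k l = ncoeff (pderivU (Z' - Q) ^ 2) k l := by
    rw [ncoeff, ncoeff]
    congr 1
    apply sq_coeff_eq _ _ m (hord Z hZ) (hord Z' hZ')
    · intro e he
      rw [coeff_pderivU, coeff_pderivU]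
      congr 1
      rw [map_sub, map_sub]
      congr 1
      apply cagree
      simp only [Finsupp.add_apply, Finsupp.single_apply]
      simp
      omega
    · rw [d_apply0, d_apply1, hkl]
  rw [hdec Z, hdec Z', hnadd, hnadd, lead_val _ _ _ _ _ h3,
    lead_val _ _ _ _ _ (hkl ▸ hm), hsq]
  ring
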